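/- The function I(x) = x·log(x/2) + x·arsinh(2x) − x − (1/2)√(1+4x²) + 3/2, defined for x > 0 and extended by I(0) = 3/2 − 1/2 = 1 via continuity (lim_{x→0+} I(x) = 1), is strictly convex on (0,∞), attains its unique minimum value 0 at x = 2/3, and satisfies I(x) → ∞ as x → ∞. -/

import Mathlib

open Real Filter Topology

/-- The rate function `I(x) = x log(x/2) + x arsinh(2x) - x - √(1+4x²)/2 + 3/2`. -/
noncomputable def rateI (x : ℝ) : ℝ :=
  x * Real.log (x / 2) + x * Real.arsinh (2 * x) - x - Real.sqrt (1 + 4 * x ^ 2) / 2 + 3 / 2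

lemma sqrt_one_add_pos (x : ℝ) : 0 < Real.sqrt (1 + 4 * x ^ 2) := by
  apply Real.sqrt_pos.2; positivity

lemma hasDerivAt_rateI {x : ℝ} (hx : 0 < x) :
    HasDerivAt rateI (Real.log (x / 2) + Real.arsinh (2 * x)) x := by
  have hs : Real.sqrt (1 + 4 * x ^ 2) ≠ 0 := (sqrt_one_add_pos x).ne'
  have h1 : HasDerivAt (fun y : ℝ => Real.log (y / 2)) (1 / x) x := by
    have := (Real.hasDerivAt_log (by positivity : x / 2 ≠ 0)).comp x
      ((hasDerivAt_id x).div_const 2)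
    refine this.congr_deriv ?_
    field_simp
  have h2 : HasDerivAt (fun y : ℝ => y * Real.log (y / 2)) (Real.log (x / 2) + 1) x := by
    have := (hasDerivAt_id x).mul h1
    refine this.congr_deriv ?_
    field_simp
    simp only [id]
    ring
  have h3 : HasDerivAt (fun y : ℝ => Real.arsinh (2 * y))
      (2 / Real.sqrt (1 + 4 * x ^ 2)) x := by
    have hinner : HasDerivAt (fun y : ℝ => 2 * y) 2 x := by
      simpa using (hasDerivAt_id x).const_mul 2
    have h := (Real.hasDerivAt_arsinh (2 * x)).comp x hinner
    have heq : (1 : ℝ) + (2 * x) ^ 2 = 1 + 4 * x ^ 2 := by ring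
    rw [heq] at h
    have hd : 2 / Real.sqrt (1 + 4 * x ^ 2)
        = (Real.sqrt (1 + 4 * x ^ 2))⁻¹ * 2 := by
      rw [div_eq_inv_mul]
    rw [hd]
    exact h
  have h4 : HasDerivAt (fun y : ℝ => y * Real.arsinh (2 * y))
      (Real.arsinh (2 * x) + x * (2 / Real.sqrt (1 + 4 * x ^ 2))) x := by
    have := (hasDerivAt_id x).mul h3
    refine this.congr_deriv ?_
    simp only [id]
    ring
  have h5 : HasDerivAt (fun y : ℝ => Real.sqrt (1 + 4 * y ^ 2))
      (4 * x / Real.sqrt (1 + 4 * x ^ 2)) x := by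
    have hin : HasDerivAt (fun y : ℝ => 1 + 4 * y ^ 2) (8 * x) x := by
      have := ((hasDerivAt_pow 2 x).const_mul 4).const_add 1
      refine this.congr_deriv ?_
      ring
    have := (Real.hasDerivAt_sqrt (by positivity : (1 : ℝ) + 4 * x ^ 2 ≠ 0)).comp x hin
    refine this.congr_deriv ?_
    field_simp
    ring
  have h := (((h2.add h4).sub (hasDerivAt_id x)).sub (h5.div_const 2)).add_const (3/2)
  have hfun : rateI = fun y : ℝ => y * Real.log (y / 2) + y * Real.arsinh (2 * y)
      - id y - Real.sqrt (1 + 4 * y ^ 2) / 2 + 3 / 2 := rfl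
  rw [hfun]
  refine h.congr_deriv ?_
  field_simp
  ring

lemma deriv_rateI {x : ℝ} (hx : 0 < x) :
    deriv rateI x = Real.log (x / 2) + Real.arsinh (2 * x) :=
  (hasDerivAt_rateI hx).deriv

lemma contOn_rateI {s : Set ℝ} (hs : s ⊆ Set.Ioi (0 : ℝ)) : ContinuousOn rateI s :=
  fun x hx => ((hasDerivAt_rateI (hs hx)).continuousAt).continuousWithinAt

lemma arsinh_four_thirds : Real.arsinh (4 / 3) = Real.log 3 := by
  rw [Real.arsinh]
  have h : Real.sqrt (1 + (4 / 3 : ℝ) ^ 2) = 5 / 3 := by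
    rw [show (1 : ℝ) + (4 / 3 : ℝ) ^ 2 = (5 / 3) ^ 2 by norm_num,
      Real.sqrt_sq (by norm_num)]
  rw [h]
  norm_num

lemma deriv_two_thirds : Real.log ((2 / 3 : ℝ) / 2) + Real.arsinh (2 * (2 / 3)) = 0 := by
  rw [show ((2 / 3 : ℝ) / 2) = (3 : ℝ)⁻¹ by norm_num, show (2 : ℝ) * (2 / 3) = 4 / 3 by norm_num,
    arsinh_four_thirds, Real.log_inv]
  ring

lemma phi_strictMono : StrictMonoOn (fun x : ℝ => Real.log (x / 2) + Real.arsinh (2 * x))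
    (Set.Ioi (0 : ℝ)) := by
  intro a ha b hb hab
  have h1 : Real.log (a / 2) < Real.log (b / 2) :=
    Real.log_lt_log (by simpa using (Set.mem_Ioi.1 ha)) (by linarith)
  have h2 : Real.arsinh (2 * a) ≤ Real.arsinh (2 * b) :=
    le_of_lt (Real.arsinh_lt_arsinh.2 (by linarith))
  linarith

/-- The rate function `I` is strictly convex on `(0,∞)`, tends to `1` as `x → 0⁺`,
attains its unique minimum value `0` at `x = 2/3`, and tends to `∞` as `x → ∞`. -/
theorem rateI_properties :
    StrictConvexOn ℝ (Set.Ioi (0 : ℝ)) rateI ∧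
    Filter.Tendsto rateI (𝓝[>] (0 : ℝ)) (𝓝 1) ∧
    rateI (2 / 3) = 0 ∧
    (∀ x : ℝ, 0 < x → x ≠ 2 / 3 → 0 < rateI x) ∧
    Filter.Tendsto rateI Filter.atTop Filter.atTop := by
  have hval : rateI (2 / 3) = 0 := by
    rw [rateI, show ((2 / 3 : ℝ) / 2) = (3 : ℝ)⁻¹ by norm_num,
      show (2 : ℝ) * (2 / 3) = 4 / 3 by norm_num,
      show (1 : ℝ) + 4 * (2 / 3) ^ 2 = (5 / 3) ^ 2 by norm_num,
      Real.sqrt_sq (by norm_num), arsinh_four_thirds, Real.log_inv]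
    ring
  refine ⟨?_, ?_, hval, ?_, ?_⟩
  · -- strict convexity
    apply StrictMonoOn.strictConvexOn_of_deriv (convex_Ioi 0)
      (contOn_rateI le_rfl)
    rw [interior_Ioi]
    intro a ha b hb hab
    rw [deriv_rateI ha, deriv_rateI hb]
    exact phi_strictMono ha hb hab
  · -- limit at 0+
    have h1 : Tendsto (fun x : ℝ => x * Real.log (x / 2)) (𝓝[>] 0) (𝓝 0) := by
      have h := tendsto_log_mul_rpow_nhdsGT_zero zero_lt_one
      simp only [Real.rpow_one] at h
      have h2 : Tendsto (fun x : ℝ => Real.log x * x - x * Real.log 2) (𝓝[>] 0)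
          (𝓝 (0 - 0 * Real.log 2)) :=
        h.sub ((tendsto_nhdsWithin_of_tendsto_nhds (tendsto_id)).mul_const (Real.log 2))
      simp only [zero_mul, sub_zero] at h2
      apply h2.congr'
      filter_upwards [self_mem_nhdsWithin] with x hx
      rw [Real.log_div (ne_of_gt hx) two_ne_zero]
      ring
    have h2 : Tendsto (fun x : ℝ => x * Real.arsinh (2 * x) - x -
        Real.sqrt (1 + 4 * x ^ 2) / 2 + 3 / 2) (𝓝[>] 0)
        (𝓝 (0 * Real.arsinh (2 * 0) - 0 - Real.sqrt (1 + 4 * 0 ^ 2) / 2 + 3 / 2)) := by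
      apply tendsto_nhdsWithin_of_tendsto_nhds
      apply Continuous.tendsto
      continuity
    have hsum := h1.add h2
    norm_num [Real.sqrt_one] at hsum
    exact Tendsto.congr (fun x => by rw [rateI]; ring) hsum
  · -- positivity away from 2/3
    intro x hx hne
    rcases lt_or_gt_of_ne hne with h | h
    · -- x < 2/3 : strictly decreasing on Ioc 0 (2/3)
      have hanti : StrictAntiOn rateI (Set.Ioc 0 (2 / 3 : ℝ)) := by
        apply strictAntiOn_of_deriv_neg (convex_Ioc 0 (2/3))
          (contOn_rateI (by intro y hy; exact hy.1))
        intro y hy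
        rw [interior_Ioc] at hy
        rw [deriv_rateI hy.1]
        have := phi_strictMono (Set.mem_Ioi.2 hy.1) (Set.mem_Ioi.2 (by norm_num)) hy.2
        simpa [deriv_two_thirds] using this
      have := hanti ⟨hx, le_of_lt h⟩ ⟨by norm_num, le_refl _⟩ h
      rw [hval] at this; exact this
    · -- x > 2/3 : strictly increasing on Ici (2/3)
      have hmono : StrictMonoOn rateI (Set.Ici (2 / 3 : ℝ)) := by
        apply strictMonoOn_of_deriv_pos (convex_Ici (2/3))
          (contOn_rateI (by intro y hy; simp only [Set.mem_Ici] at hy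
                            exact Set.mem_Ioi.2 (by linarith)))
        intro y hy
        rw [interior_Ici] at hy
        rw [deriv_rateI (by simp only [Set.mem_Ioi] at hy; linarith)]
        have := phi_strictMono (Set.mem_Ioi.2 (by norm_num))
          (Set.mem_Ioi.2 (by simp only [Set.mem_Ioi] at hy; linarith)) hy
        simpa [deriv_two_thirds] using this
      have := hmono (Set.mem_Ici.2 le_rfl) (Set.mem_Ici.2 (le_of_lt h)) h
      rw [hval] at this; exact this
  · -- limit at infinity
    have hg : Tendsto (fun x : ℝ => x * (Real.log (x / 2) - 2) + 1) atTop atTop := by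
      apply tendsto_atTop_add_const_right
      apply Tendsto.atTop_mul_atTop₀ tendsto_id
      apply tendsto_atTop_add_const_right
      exact Real.tendsto_log_atTop.comp (tendsto_id.atTop_div_const two_pos)
    apply tendsto_atTop_mono' _ _ hg
    filter_upwards [eventually_ge_atTop (0 : ℝ)] with x hx
    have hars : 0 ≤ Real.arsinh (2 * x) := Real.arsinh_nonneg_iff.2 (by linarith)
    have hsq : Real.sqrt (1 + 4 * x ^ 2) ≤ 1 + 2 * x := by
      rw [show (1 : ℝ) + 2 * x = Real.sqrt ((1 + 2 * x) ^ 2) from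
        (Real.sqrt_sq (by linarith)).symm]
      apply Real.sqrt_le_sqrt
      nlinarith
    rw [rateI]
    nlinarith [mul_nonneg hx hars]
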